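/- Let φ : ℝ → ℂ be continuously differentiable with φ ∈ L^∞(ℝ) and ∂_x φ ∈ L²(ℝ). Define a(t,x) = Σ_{j=1,2} λ_j (σ_j+1) t^{σ_j−2} |φ(x)|^{2σ_j} and b(t,x) = Σ_{j=1,2} λ_j σ_j t^{σ_j−2} |φ(x)|^{2σ_j−2} v_p(t,x)². Then for every ε > 0 there exists a constant C > 0, depending only on λ₁, λ₂, σ, ε, ‖φ‖_{L^∞} and ‖∂_x φ‖_{L²}, such that for all t ∈ (0,1]: sup_{x∈ℝ} ( |a(t,x)| + |b(t,x)| ) ≤ C t^{−1} and ‖∂_x a(t,·)‖_{L²(ℝ)} + ‖∂_x b(t,·)‖_{L²(ℝ)} ≤ C t^{−1−ε}. -/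

import Mathlib

set_option maxHeartbeats 2000000


open MeasureTheory Complex ENNReal

/-- The asymptotic profile
`v_p(t,x) = exp(−iλ₁|φ(x)|² log t − i(λ₂/(σ−1))|φ(x)|^{2σ} t^{σ−1}) conj(φ(x))`. -/
noncomputable def vp (lam1 lam2 σ : ℝ) (φ : ℝ → ℂ) (t x : ℝ) : ℂ :=
  Complex.exp (-(Complex.I) * (↑lam1:ℂ) * (↑(‖φ x‖ ^ 2):ℂ) * (↑(Real.log t):ℂ)
      - Complex.I * (↑(lam2/(σ-1)):ℂ) * (↑(‖φ x‖ ^ (2*σ)):ℂ) * (↑(t ^ (σ-1)):ℂ))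
    * (starRingEnd ℂ) (φ x)

/-- `a(t,x) = Σ_{j=1,2} λⱼ (σⱼ+1) t^{σⱼ−2} |φ(x)|^{2σⱼ}` with `σ₁ = 1`, `σ₂ = σ`. -/
noncomputable def potA (lam1 lam2 σ : ℝ) (φ : ℝ → ℂ) (t x : ℝ) : ℝ :=
  lam1 * (1+1) * t ^ ((1:ℝ)-2) * ‖φ x‖ ^ (2*(1:ℝ))
  + lam2 * (σ+1) * t ^ (σ-2) * ‖φ x‖ ^ (2*σ)

/-- `b(t,x) = Σ_{j=1,2} λⱼ σⱼ t^{σⱼ−2} |φ(x)|^{2σⱼ−2} v_p(t,x)²` with `σ₁ = 1`, `σ₂ = σ`,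
`|φ(x)|^{2σ₁−2}` understood as `1`. -/
noncomputable def potB (lam1 lam2 σ : ℝ) (φ : ℝ → ℂ) (t x : ℝ) : ℂ :=
  (↑(lam1 * 1 * t ^ ((1:ℝ)-2) * ‖φ x‖ ^ (2*(1:ℝ)-2)):ℂ) * (vp lam1 lam2 σ φ t x) ^ 2
  + (↑(lam2 * σ * t ^ (σ-2) * ‖φ x‖ ^ (2*σ-2)):ℂ) * (vp lam1 lam2 σ φ t x) ^ 2

noncomputable def pbR (φ : ℝ → ℂ) (x : ℝ) : ℝ := ‖φ x‖ ^ 2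

noncomputable def pbTh (lam1 lam2 σ : ℝ) (φ : ℝ → ℂ) (t x : ℝ) : ℝ :=
  -(lam1 * pbR φ x * Real.log t) - lam2/(σ-1) * (pbR φ x) ^ σ * t ^ (σ-1)

lemma pb_rpow_two_mul (a : ℝ) (ha : 0 ≤ a) (s : ℝ) : a ^ (2*s) = (a^2) ^ s := by
  rw [← Real.rpow_natCast a 2, ← Real.rpow_mul ha]
  norm_num

lemma pb_rpow_two_mul_sub (a : ℝ) (ha : 0 ≤ a) (s : ℝ) : a ^ (2*s-2) = (a^2) ^ (s-1) := by
  rw [show 2*s-2 = 2*(s-1) by ring, pb_rpow_two_mul a ha]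

lemma pb_rpow_sub_one_mul {r : ℝ} (hr : 0 < r) (s : ℝ) : r ^ (s-1) * r = r ^ s := by
  nth_rewrite 2 [← Real.rpow_one r]
  rw [← Real.rpow_add hr]
  norm_num

lemma pb_rpow_sub_one_mul' {r : ℝ} (hr : 0 ≤ r) {s : ℝ} (hs : s ≠ 0) : r ^ (s-1) * r = r ^ s := by
  rcases hr.eq_or_lt with h|h
  · rw [← h]; simp [Real.zero_rpow hs]
  · exact pb_rpow_sub_one_mul h s

lemma pb_vp_eq (lam1 lam2 σ : ℝ) (φ : ℝ → ℂ) (t x : ℝ) :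
    vp lam1 lam2 σ φ t x
      = Complex.exp ((pbTh lam1 lam2 σ φ t x : ℝ) * Complex.I) * (starRingEnd ℂ) (φ x) := by
  unfold vp pbTh pbR
  congr 2
  rw [pb_rpow_two_mul _ (norm_nonneg _) σ]
  push_cast
  ring

lemma pb_abs_vp (lam1 lam2 σ : ℝ) (φ : ℝ → ℂ) (t x : ℝ) :
    ‖vp lam1 lam2 σ φ t x‖ = ‖φ x‖ := by
  rw [pb_vp_eq, norm_mul, Complex.norm_exp]
  simp

lemma pb_hasDerivAt_abs_sq {φ : ℝ → ℂ} {x : ℝ} {d : ℂ} (hφ : HasDerivAt φ d x) :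
    HasDerivAt (pbR φ) (2 * ((starRingEnd ℂ) (φ x) * d).re) x := by
  have hre : HasDerivAt (fun y => (φ y).re) d.re x :=
    (Complex.reCLM.hasFDerivAt.comp_hasDerivAt x hφ)
  have him : HasDerivAt (fun y => (φ y).im) d.im x :=
    (Complex.imCLM.hasFDerivAt.comp_hasDerivAt x hφ)
  have h := (hre.mul hre).add (him.mul him)
  have heq : ((fun y => (φ y).re) * (fun y => (φ y).re) + (fun y => (φ y).im) * (fun y => (φ y).im)) = pbR φ := by
    funext y; simp only [Pi.add_apply, Pi.mul_apply]; rw [pbR, Complex.sq_norm, Complex.normSq_apply]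
  rw [heq] at h
  refine h.congr_deriv ?_
  simp [Complex.mul_re]; ring

lemma pb_keyA (lam1 lam2 σ : ℝ) (hσ1 : 1 < σ) {φ : ℝ → ℂ}
    (hφd : ∀ x, HasDerivAt φ (deriv φ x) x)
    {M : ℝ} (hM0 : 0 ≤ M) (hMb : ∀ x, ‖φ x‖ ≤ M)
    {t : ℝ} (ht0 : 0 < t) (ht1 : t ≤ 1) (x : ℝ) :
    ∃ d, HasDerivAt (potA lam1 lam2 σ φ t) d x ∧
      ‖d‖ ≤ (|lam1| *2 + |lam2| * |σ+1| * |σ| *(M^2)^(σ-1))*(2*M) * t^(-1:ℝ) * ‖deriv φ x‖ := by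
  have hp0 : 0 ≤ ‖deriv φ x‖ := norm_nonneg _
  set p := ‖deriv φ x‖ with hpdef
  have ha0 : 0 ≤ ‖φ x‖ := norm_nonneg _
  have hr0 : (0:ℝ) ≤ pbR φ x := by rw [pbR]; positivity
  have hrM : pbR φ x ≤ M^2 := by rw [pbR]; exact pow_le_pow_left₀ ha0 (hMb x) 2
  have hM20 : (0:ℝ) ≤ M^2 := sq_nonneg M
  have hs10 : (0:ℝ) ≤ σ - 1 := by linarith
  have hMs0 : (0:ℝ) ≤ (M^2)^(σ-1) := Real.rpow_nonneg hM20 _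
  have hrs1 : (pbR φ x)^(σ-1) ≤ (M^2)^(σ-1) := Real.rpow_le_rpow hr0 hrM hs10
  have hrs10 : (0:ℝ) ≤ (pbR φ x)^(σ-1) := Real.rpow_nonneg hr0 _
  have htinv : (0:ℝ) < t^(-1:ℝ) := Real.rpow_pos_of_pos ht0 _
  have hts2 : t^(σ-2) ≤ t^(-1:ℝ) := Real.rpow_le_rpow_of_exponent_ge ht0 ht1 (by linarith)
  have hts2' : (0:ℝ) ≤ t^(σ-2) := (Real.rpow_pos_of_pos ht0 _).le
  have htpow : t^((1:ℝ)-2) = t^(-1:ℝ) := by norm_num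
  have hR' := pb_hasDerivAt_abs_sq (hφd x)
  set R' : ℝ := 2 * ((starRingEnd ℂ) (φ x) * deriv φ x).re with hRdef
  have h2Mp0 : (0:ℝ) ≤ 2*M*p := by positivity
  have hR : |R'| ≤ 2*M*p := by
    rw [hRdef, abs_mul, show |(2:ℝ)| = 2 by norm_num]
    have h1 : |((starRingEnd ℂ) (φ x) * deriv φ x).re| ≤ M * p := by
      calc |((starRingEnd ℂ) (φ x) * deriv φ x).re|
          ≤ ‖(starRingEnd ℂ) (φ x) * deriv φ x‖ := Complex.abs_re_le_norm _
        _ = ‖φ x‖ * ‖deriv φ x‖ := by rw [norm_mul, Complex.norm_conj]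
        _ ≤ M * p := by
            rw [hpdef]
            exact mul_le_mul_of_nonneg_right (hMb x) (norm_nonneg _)
    linarith
  have hAfun : potA lam1 lam2 σ φ t
      = fun y => lam1*2*t^((1:ℝ)-2) * pbR φ y + lam2*(σ+1)*t^(σ-2) * (pbR φ y)^σ := by
    funext y
    rw [potA, pbR, pb_rpow_two_mul _ (norm_nonneg _) 1, Real.rpow_one,
      pb_rpow_two_mul _ (norm_nonneg _) σ]
    ring
  have hrσ : HasDerivAt (fun y => (pbR φ y)^σ) (R' * σ * (pbR φ x)^(σ-1)) x :=
    hR'.rpow_const (Or.inr hσ1.le)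
  refine ⟨lam1*2*t^((1:ℝ)-2) * R' + lam2*(σ+1)*t^(σ-2) * (R' * σ * (pbR φ x)^(σ-1)), ?_, ?_⟩
  · rw [hAfun]; exact (hR'.const_mul _).add (hrσ.const_mul _)
  · rw [Real.norm_eq_abs, htpow]
    have hT1 : |lam1*2*t^(-1:ℝ) * R'| ≤ |lam1| *2*t^(-1:ℝ)*(2*M*p) := by
      rw [abs_mul, abs_mul, abs_mul, show |(2:ℝ)| = 2 by norm_num,
        _root_.abs_of_nonneg htinv.le]
      exact mul_le_mul_of_nonneg_left hR
        (mul_nonneg (mul_nonneg (abs_nonneg _) (by norm_num)) htinv.le)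
    have hT2 : |lam2*(σ+1)*t^(σ-2) * (R' * σ * (pbR φ x)^(σ-1))|
        ≤ |lam2| * |σ+1| *t^(-1:ℝ)*((2*M*p)* |σ| *(M^2)^(σ-1)) := by
      rw [abs_mul, abs_mul, abs_mul, abs_mul, abs_mul,
        _root_.abs_of_nonneg hts2', _root_.abs_of_nonneg hrs10]
      have hinner : |R'| * |σ| *(pbR φ x)^(σ-1) ≤ (2*M*p)* |σ| *(M^2)^(σ-1) :=
        mul_le_mul (mul_le_mul_of_nonneg_right hR (abs_nonneg _)) hrs1 hrs10
          (mul_nonneg h2Mp0 (abs_nonneg _))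
      exact mul_le_mul (mul_le_mul_of_nonneg_left hts2 (mul_nonneg (abs_nonneg _) (abs_nonneg _)))
        hinner (mul_nonneg (mul_nonneg (abs_nonneg _) (abs_nonneg _)) hrs10)
        (mul_nonneg (mul_nonneg (abs_nonneg _) (abs_nonneg _)) htinv.le)
    calc |lam1*2*t^(-1:ℝ) * R' + lam2*(σ+1)*t^(σ-2) * (R' * σ * (pbR φ x)^(σ-1))|
        ≤ |lam1*2*t^(-1:ℝ) * R'| + |lam2*(σ+1)*t^(σ-2) * (R' * σ * (pbR φ x)^(σ-1))| :=
          abs_add_le _ _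
      _ ≤ |lam1| *2*t^(-1:ℝ)*(2*M*p) + |lam2| * |σ+1| *t^(-1:ℝ)*((2*M*p)* |σ| *(M^2)^(σ-1)) := by
          linarith
      _ = (|lam1| *2 + |lam2| * |σ+1| * |σ| *(M^2)^(σ-1))*(2*M) * t^(-1:ℝ) * p := by ring

lemma pb_sup (lam1 lam2 σ : ℝ) (hσ1 : 1 < σ) {φ : ℝ → ℂ}
    {M : ℝ} (hM0 : 0 ≤ M) (hMb : ∀ x, ‖φ x‖ ≤ M)
    {t : ℝ} (ht0 : 0 < t) (ht1 : t ≤ 1) (x : ℝ) :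
    |potA lam1 lam2 σ φ t x| + ‖potB lam1 lam2 σ φ t x‖
      ≤ (|lam1| * 2*M^2 + |lam2| * |σ+1| * (M^2)^σ + |lam1| * M^2 + |lam2| * |σ| * (M^2)^σ)
        * t^(-1:ℝ) := by
  have ha0 : 0 ≤ ‖φ x‖ := norm_nonneg _
  have hr0 : (0:ℝ) ≤ pbR φ x := by rw [pbR]; positivity
  have hrM : pbR φ x ≤ M^2 := by rw [pbR]; exact pow_le_pow_left₀ ha0 (hMb x) 2
  have hM20 : (0:ℝ) ≤ M^2 := sq_nonneg M
  have hσ0 : (0:ℝ) < σ := by linarith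
  have hrsσ : (pbR φ x)^σ ≤ (M^2)^σ := Real.rpow_le_rpow hr0 hrM hσ0.le
  have hrsσ0 : (0:ℝ) ≤ (pbR φ x)^σ := Real.rpow_nonneg hr0 _
  have hMsσ0 : (0:ℝ) ≤ (M^2)^σ := Real.rpow_nonneg hM20 _
  have htinv : (0:ℝ) < t^(-1:ℝ) := Real.rpow_pos_of_pos ht0 _
  have hts2 : t^(σ-2) ≤ t^(-1:ℝ) := Real.rpow_le_rpow_of_exponent_ge ht0 ht1 (by linarith)
  have hts2' : (0:ℝ) ≤ t^(σ-2) := (Real.rpow_pos_of_pos ht0 _).le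
  have htpow : t^((1:ℝ)-2) = t^(-1:ℝ) := by norm_num
  have hA : |potA lam1 lam2 σ φ t x|
      ≤ |lam1| * 2*(t^(-1:ℝ) * M^2) + |lam2| * |σ+1| * (t^(-1:ℝ) * (M^2)^σ) := by
    have hAeq : potA lam1 lam2 σ φ t x
        = lam1*2*(t^((1:ℝ)-2) * pbR φ x) + lam2*(σ+1)*(t^(σ-2) * (pbR φ x)^σ) := by
      rw [potA, pbR, pb_rpow_two_mul _ ha0 1, Real.rpow_one, pb_rpow_two_mul _ ha0 σ]
      ring
    rw [hAeq, htpow]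
    calc |lam1*2*(t^(-1:ℝ) * pbR φ x) + lam2*(σ+1)*(t^(σ-2) * (pbR φ x)^σ)|
        ≤ |lam1*2*(t^(-1:ℝ) * pbR φ x)| + |lam2*(σ+1)*(t^(σ-2) * (pbR φ x)^σ)| := abs_add_le _ _
      _ = |lam1| * 2*(t^(-1:ℝ) * pbR φ x) + |lam2| * |σ+1| * (t^(σ-2) * (pbR φ x)^σ) := by
          simp only [abs_mul, _root_.abs_of_nonneg htinv.le, _root_.abs_of_nonneg hr0,
            _root_.abs_of_nonneg hts2', _root_.abs_of_nonneg hrsσ0, abs_two]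
      _ ≤ |lam1| * 2*(t^(-1:ℝ) * M^2) + |lam2| * |σ+1| * (t^(-1:ℝ) * (M^2)^σ) := by
          have h1 : t^(-1:ℝ) * pbR φ x ≤ t^(-1:ℝ) * M^2 :=
            mul_le_mul_of_nonneg_left hrM htinv.le
          have h2 : t^(σ-2) * (pbR φ x)^σ ≤ t^(-1:ℝ) * (M^2)^σ :=
            mul_le_mul hts2 hrsσ hrsσ0 htinv.le
          have hc1 : (0:ℝ) ≤ |lam1| * 2 := by positivity
          have hc2 : (0:ℝ) ≤ |lam2| * |σ+1| := by positivity
          nlinarith [mul_le_mul_of_nonneg_left h1 hc1, mul_le_mul_of_nonneg_left h2 hc2]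
  have hB : ‖potB lam1 lam2 σ φ t x‖
      ≤ |lam1| * (t^(-1:ℝ) * M^2) + |lam2| * |σ| * (t^(-1:ℝ) * (M^2)^σ) := by
    have e1 : ‖φ x‖ ^ (2*σ-2) * pbR φ x = (pbR φ x)^σ := by
      rw [pb_rpow_two_mul_sub _ ha0 σ, pbR]
      exact pb_rpow_sub_one_mul' (sq_nonneg _) (ne_of_gt hσ0)
    rw [potB]
    calc ‖(↑(lam1 * 1 * t ^ ((1:ℝ)-2) * ‖φ x‖ ^ (2*(1:ℝ)-2)):ℂ)
            * (vp lam1 lam2 σ φ t x) ^ 2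
          + (↑(lam2 * σ * t ^ (σ-2) * ‖φ x‖ ^ (2*σ-2)):ℂ)
            * (vp lam1 lam2 σ φ t x) ^ 2‖
        ≤ ‖(↑(lam1 * 1 * t ^ ((1:ℝ)-2) * ‖φ x‖ ^ (2*(1:ℝ)-2)):ℂ)
            * (vp lam1 lam2 σ φ t x) ^ 2‖
          + ‖(↑(lam2 * σ * t ^ (σ-2) * ‖φ x‖ ^ (2*σ-2)):ℂ)
            * (vp lam1 lam2 σ φ t x) ^ 2‖ := norm_add_le _ _
      _ = |lam1 * 1 * t ^ ((1:ℝ)-2) * ‖φ x‖ ^ (2*(1:ℝ)-2)| * pbR φ x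
          + |lam2 * σ * t ^ (σ-2) * ‖φ x‖ ^ (2*σ-2)| * pbR φ x := by
          rw [norm_mul, norm_mul, Complex.norm_real, Complex.norm_real, norm_pow,
            pb_abs_vp, pbR, Real.norm_eq_abs, Real.norm_eq_abs]
      _ = |lam1| * (t^(-1:ℝ) * pbR φ x)
          + |lam2| * |σ| * (t^(σ-2) * (‖φ x‖ ^ (2*σ-2) * pbR φ x)) := by
          rw [show (2*(1:ℝ)-2) = 0 by norm_num, Real.rpow_zero, htpow]
          simp only [abs_mul, _root_.abs_of_nonneg htinv.le, _root_.abs_of_nonneg hts2',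
            _root_.abs_of_nonneg (Real.rpow_nonneg ha0 _)]
          norm_num
          ring
      _ = |lam1| * (t^(-1:ℝ) * pbR φ x) + |lam2| * |σ| * (t^(σ-2) * (pbR φ x)^σ) := by
          rw [e1]
      _ ≤ |lam1| * (t^(-1:ℝ) * M^2) + |lam2| * |σ| * (t^(-1:ℝ) * (M^2)^σ) := by
          have h1 : t^(-1:ℝ) * pbR φ x ≤ t^(-1:ℝ) * M^2 :=
            mul_le_mul_of_nonneg_left hrM htinv.le
          have h2 : t^(σ-2) * (pbR φ x)^σ ≤ t^(-1:ℝ) * (M^2)^σ :=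
            mul_le_mul hts2 hrsσ hrsσ0 htinv.le
          have hc2 : (0:ℝ) ≤ |lam2| * |σ| := by positivity
          nlinarith [mul_le_mul_of_nonneg_left h2 hc2, abs_nonneg lam1,
            mul_le_mul_of_nonneg_left h1 (abs_nonneg lam1)]
  calc |potA lam1 lam2 σ φ t x| + ‖potB lam1 lam2 σ φ t x‖
      ≤ (|lam1| * 2*(t^(-1:ℝ) * M^2) + |lam2| * |σ+1| * (t^(-1:ℝ) * (M^2)^σ))
        + (|lam1| * (t^(-1:ℝ) * M^2) + |lam2| * |σ| * (t^(-1:ℝ) * (M^2)^σ)) := add_le_add hA hB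
    _ = (|lam1| * 2*M^2 + |lam2| * |σ+1| * (M^2)^σ + |lam1| * M^2 + |lam2| * |σ| * (M^2)^σ)
        * t^(-1:ℝ) := by ring

lemma pb_hasDerivAt_conj {φ : ℝ → ℂ} {x : ℝ} {d : ℂ} (hφ : HasDerivAt φ d x) :
    HasDerivAt (fun y => (starRingEnd ℂ) (φ y)) ((starRingEnd ℂ) d) x := by
  have := Complex.conjCLE.toContinuousLinearMap.hasFDerivAt.comp_hasDerivAt x hφ
  exact this

lemma pb_hasDerivAt_mul_zero {h g : ℝ → ℂ} {x : ℝ} {B : ℝ}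
    (hb : ∀ y, ‖h y‖ ≤ B) (hg : HasDerivAt g 0 x) (hg0 : g x = 0) :
    HasDerivAt (fun y => h y * g y) 0 x := by
  rw [hasDerivAt_iff_isLittleO] at hg ⊢
  simp only [hg0, smul_zero, sub_zero, mul_zero] at hg ⊢
  have hO : (fun y => h y * g y) =O[nhds x] g :=
    Asymptotics.IsBigO.of_bound B (Filter.Eventually.of_forall (fun y => by
      rw [norm_mul]
      exact mul_le_mul_of_nonneg_right (hb y) (norm_nonneg _)))
  exact hO.trans_isLittleO hg

lemma pb_hasDerivAt_th (lam1 lam2 σ : ℝ) (hσ : 1 ≤ σ) {φ : ℝ → ℂ} (t : ℝ) {x : ℝ} {d : ℂ}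
    (hφ : HasDerivAt φ d x) :
    HasDerivAt (pbTh lam1 lam2 σ φ t)
      ((-(lam1 * Real.log t) - lam2 * σ/(σ-1) * t^(σ-1) * (pbR φ x)^(σ-1))
        * (2 * ((starRingEnd ℂ) (φ x) * d).re)) x := by
  have hr := pb_hasDerivAt_abs_sq hφ
  have hrs : HasDerivAt (fun y => (pbR φ y) ^ σ)
      ((2 * ((starRingEnd ℂ) (φ x) * d).re) * σ * (pbR φ x) ^ (σ-1)) x :=
    hr.rpow_const (Or.inr hσ)
  have h := (((hr.const_mul lam1).mul_const (Real.log t)).neg).sub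
    ((hrs.const_mul (lam2/(σ-1))).mul_const (t^(σ-1)))
  exact h.congr_deriv (by ring)

lemma pb_hasDerivAt_expth (lam1 lam2 σ : ℝ) (hσ : 1 ≤ σ) {φ : ℝ → ℂ} (t : ℝ) {x : ℝ} {d : ℂ}
    (hφ : HasDerivAt φ d x) :
    HasDerivAt (fun y => Complex.exp ((pbTh lam1 lam2 σ φ t y : ℝ) * Complex.I))
      (Complex.exp ((pbTh lam1 lam2 σ φ t x : ℝ) * Complex.I) *
        ((((-(lam1 * Real.log t) - lam2 * σ/(σ-1) * t^(σ-1) * (pbR φ x)^(σ-1))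
          * (2 * ((starRingEnd ℂ) (φ x) * d).re) : ℝ) : ℂ) * Complex.I)) x := by
  have hth := pb_hasDerivAt_th lam1 lam2 σ hσ t hφ
  have h1 : HasDerivAt (fun y => ((pbTh lam1 lam2 σ φ t y : ℝ) : ℂ))
      (((-(lam1 * Real.log t) - lam2 * σ/(σ-1) * t^(σ-1) * (pbR φ x)^(σ-1))
        * (2 * ((starRingEnd ℂ) (φ x) * d).re) : ℝ) : ℂ) x :=
    Complex.ofRealCLM.hasFDerivAt.comp_hasDerivAt x hth
  exact (h1.mul_const Complex.I).cexp

lemma pb_keyB (lam1 lam2 σ : ℝ) (hσ1 : 1 < σ) {φ : ℝ → ℂ}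
    (hφd : ∀ x, HasDerivAt φ (deriv φ x) x)
    {M : ℝ} (hM0 : 0 ≤ M) (hMb : ∀ x, ‖φ x‖ ≤ M)
    {t : ℝ} (ht0 : 0 < t) (ht1 : t ≤ 1) (x : ℝ) :
    ∃ d, HasDerivAt (potB lam1 lam2 σ φ t) d x ∧
      ‖d‖ ≤ (|lam1| * (4*(M*M*M)*(|lam1| * |Real.log t| + |lam2*σ/(σ-1)| * (M^2)^(σ-1)) + 2*M)
          + |lam2| * |σ| * (|σ-1| * ((M^2)^(σ-1))*(2*M)
             + ((M^2)^(σ-1))*(4*(M*M*M)*(|lam1| * |Real.log t|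
                + |lam2*σ/(σ-1)| * (M^2)^(σ-1)) + 2*M)))
        * t^(-1:ℝ) * ‖deriv φ x‖ := by
  have hp0 : 0 ≤ ‖deriv φ x‖ := norm_nonneg _
  set p := ‖deriv φ x‖ with hpdef
  have ha0 : 0 ≤ ‖φ x‖ := norm_nonneg _
  have hr0 : (0:ℝ) ≤ pbR φ x := by rw [pbR]; positivity
  have hrM : pbR φ x ≤ M^2 := by rw [pbR]; exact pow_le_pow_left₀ ha0 (hMb x) 2
  have hrMy : ∀ y, pbR φ y ≤ M^2 := fun y => by
    rw [pbR]; exact pow_le_pow_left₀ (norm_nonneg _) (hMb y) 2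
  have hM20 : (0:ℝ) ≤ M^2 := sq_nonneg M
  have hs10 : (0:ℝ) ≤ σ - 1 := by linarith
  set TL := |Real.log t| with hTLdef
  set Q2 := |lam2*σ/(σ-1)| with hQ2def
  set Ms := (M^2)^(σ-1) with hMsdef
  have hMs0 : (0:ℝ) ≤ Ms := by rw [hMsdef]; exact Real.rpow_nonneg hM20 _
  have hrs1 : (pbR φ x)^(σ-1) ≤ Ms := by
    rw [hMsdef]; exact Real.rpow_le_rpow hr0 hrM hs10
  have hrs10 : (0:ℝ) ≤ (pbR φ x)^(σ-1) := Real.rpow_nonneg hr0 _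
  have htinv : (0:ℝ) < t^(-1:ℝ) := Real.rpow_pos_of_pos ht0 _
  have hts2 : t^(σ-2) ≤ t^(-1:ℝ) := Real.rpow_le_rpow_of_exponent_ge ht0 ht1 (by linarith)
  have hts2' : (0:ℝ) ≤ t^(σ-2) := (Real.rpow_pos_of_pos ht0 _).le
  have hts1 : t^(σ-1) ≤ 1 := Real.rpow_le_one ht0.le ht1 (by linarith)
  have hts1' : (0:ℝ) ≤ t^(σ-1) := (Real.rpow_pos_of_pos ht0 _).le
  have htpow : t^((1:ℝ)-2) = t^(-1:ℝ) := by norm_num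
  have hR' := pb_hasDerivAt_abs_sq (hφd x)
  set R' : ℝ := 2 * ((starRingEnd ℂ) (φ x) * deriv φ x).re with hRdef
  have h2Mp0 : (0:ℝ) ≤ 2*M*p := by positivity
  have hR : |R'| ≤ 2*M*p := by
    rw [hRdef, abs_mul, show |(2:ℝ)| = 2 by norm_num]
    have h1 : |((starRingEnd ℂ) (φ x) * deriv φ x).re| ≤ M * p := by
      calc |((starRingEnd ℂ) (φ x) * deriv φ x).re|
          ≤ ‖(starRingEnd ℂ) (φ x) * deriv φ x‖ := Complex.abs_re_le_norm _
        _ = ‖φ x‖ * ‖deriv φ x‖ := by rw [norm_mul, Complex.norm_conj]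
        _ ≤ M * p := by
            rw [hpdef]
            exact mul_le_mul_of_nonneg_right (hMb x) (norm_nonneg _)
    linarith
  set G1 := |lam1| * TL + Q2*Ms with hG1def
  have hG10 : (0:ℝ) ≤ G1 := by
    rw [hG1def]
    exact add_nonneg (mul_nonneg (abs_nonneg _) (abs_nonneg _)) (mul_nonneg (abs_nonneg _) hMs0)
  have hM3 : (0:ℝ) ≤ M*M*M := mul_nonneg (mul_nonneg hM0 hM0) hM0
  set cV2 := 4*(M*M*M)*G1 + 2*M with hcV2def
  have hcV20 : (0:ℝ) ≤ cV2 := by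
    rw [hcV2def]
    have := mul_nonneg (by linarith : (0:ℝ) ≤ 4*(M*M*M)) hG10
    linarith
  set cF := |σ-1| * Ms*(2*M) + Ms*cV2 with hcFdef
  have hcF0 : (0:ℝ) ≤ cF := by
    rw [hcFdef]
    have h1 := mul_nonneg (mul_nonneg (abs_nonneg (σ-1)) hMs0) (by linarith : (0:ℝ) ≤ 2*M)
    have h2 := mul_nonneg hMs0 hcV20
    linarith
  have hE := pb_hasDerivAt_expth lam1 lam2 σ hσ1.le t (hφd x)
  set Th' : ℝ := (-(lam1 * Real.log t) - lam2 * σ/(σ-1) * t^(σ-1) * (pbR φ x)^(σ-1)) * R'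
    with hThdef
  have hTh'b : |Th'| ≤ G1 * (2*M*p) := by
    rw [hThdef, abs_mul]
    have hfac : |(-(lam1 * Real.log t) - lam2 * σ/(σ-1) * t^(σ-1) * (pbR φ x)^(σ-1))|
        ≤ G1 := by
      calc |(-(lam1 * Real.log t) - lam2 * σ/(σ-1) * t^(σ-1) * (pbR φ x)^(σ-1))|
          ≤ |(-(lam1 * Real.log t))| + |lam2 * σ/(σ-1) * t^(σ-1) * (pbR φ x)^(σ-1)| :=
            abs_sub _ _
        _ = |lam1| * TL + Q2 * (t^(σ-1) * ((pbR φ x)^(σ-1))) := by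
            rw [abs_neg, abs_mul, abs_mul, abs_mul, hTLdef, hQ2def,
              _root_.abs_of_nonneg hts1', _root_.abs_of_nonneg hrs10]
            ring
        _ ≤ |lam1| * TL + Q2 * Ms := by
            have h1 : t^(σ-1) * ((pbR φ x)^(σ-1)) ≤ 1 * Ms :=
              mul_le_mul hts1 hrs1 hrs10 zero_le_one
            have := mul_le_mul_of_nonneg_left h1 (abs_nonneg (lam2*σ/(σ-1)))
            rw [hQ2def]; nlinarith [this]
        _ = G1 := hG1def.symm
    exact mul_le_mul hfac hR (abs_nonneg _) hG10
  have hGfun : vp lam1 lam2 σ φ t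
      = fun y => Complex.exp ((pbTh lam1 lam2 σ φ t y : ℝ) * Complex.I)
          * (starRingEnd ℂ) (φ y) := funext fun y => pb_vp_eq lam1 lam2 σ φ t y
  have hG : HasDerivAt (vp lam1 lam2 σ φ t)
      (Complex.exp ((pbTh lam1 lam2 σ φ t x : ℝ) * Complex.I) * ((Th' : ℝ) * Complex.I)
          * (starRingEnd ℂ) (φ x)
        + Complex.exp ((pbTh lam1 lam2 σ φ t x : ℝ) * Complex.I)
          * (starRingEnd ℂ) (deriv φ x)) x := by
    rw [hGfun]
    exact hE.mul (pb_hasDerivAt_conj (hφd x))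
  set dG : ℂ := Complex.exp ((pbTh lam1 lam2 σ φ t x : ℝ) * Complex.I) * ((Th' : ℝ) * Complex.I)
      * (starRingEnd ℂ) (φ x)
    + Complex.exp ((pbTh lam1 lam2 σ φ t x : ℝ) * Complex.I) * (starRingEnd ℂ) (deriv φ x)
    with hdGdef
  have hEabs : ‖Complex.exp ((pbTh lam1 lam2 σ φ t x : ℝ) * Complex.I)‖ = 1 := by
    simp [Complex.norm_exp]
  have hdGb : ‖dG‖ ≤ G1 * (2*M*p) * M + p := by
    rw [hdGdef]
    have hn1 : ‖Complex.exp ((pbTh lam1 lam2 σ φ t x : ℝ) * Complex.I) * ((Th' : ℝ) * Complex.I)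
        * (starRingEnd ℂ) (φ x)‖ = |Th'| * ‖φ x‖ := by
      simp [norm_mul, hEabs, Complex.norm_conj, Complex.norm_real]
    have hn2 : ‖Complex.exp ((pbTh lam1 lam2 σ φ t x : ℝ) * Complex.I)
        * (starRingEnd ℂ) (deriv φ x)‖ = p := by
      rw [hpdef]
      simp [norm_mul, hEabs, Complex.norm_conj]
    calc ‖_ + _‖ ≤ ‖_‖ + ‖_‖ := norm_add_le _ _
      _ = |Th'| * ‖φ x‖ + p := by rw [hn1, hn2]
      _ ≤ G1 * (2*M*p) * M + p := by
          have := mul_le_mul hTh'b (hMb x) ha0 (mul_nonneg hG10 h2Mp0)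
          linarith
  have hsq : (fun y => vp lam1 lam2 σ φ t y ^ 2)
      = fun y => vp lam1 lam2 σ φ t y * vp lam1 lam2 σ φ t y := funext fun y => by ring
  have hV2 : HasDerivAt (fun y => vp lam1 lam2 σ φ t y ^ 2)
      (dG * vp lam1 lam2 σ φ t x + vp lam1 lam2 σ φ t x * dG) x := by
    rw [hsq]
    exact hG.mul hG
  have habsv : ‖vp lam1 lam2 σ φ t x‖ ≤ M := by
    rw [pb_abs_vp]; exact hMb x
  have hdV2b : ‖dG * vp lam1 lam2 σ φ t x + vp lam1 lam2 σ φ t x * dG‖ ≤ cV2 * p := by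
    have hdG0 : (0:ℝ) ≤ ‖dG‖ := norm_nonneg _
    have h1 : ‖dG * vp lam1 lam2 σ φ t x‖ ≤ (G1 * (2*M*p) * M + p) * M := by
      rw [norm_mul]
      exact mul_le_mul hdGb habsv (norm_nonneg _) (by nlinarith [mul_nonneg (mul_nonneg hG10 h2Mp0) hM0])
    have h2 : ‖vp lam1 lam2 σ φ t x * dG‖ ≤ M * (G1 * (2*M*p) * M + p) := by
      rw [norm_mul]
      exact mul_le_mul habsv hdGb hdG0 hM0
    calc ‖dG * vp lam1 lam2 σ φ t x + vp lam1 lam2 σ φ t x * dG‖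
        ≤ ‖dG * vp lam1 lam2 σ φ t x‖ + ‖vp lam1 lam2 σ φ t x * dG‖ := norm_add_le _ _
      _ ≤ (G1 * (2*M*p) * M + p) * M + M * (G1 * (2*M*p) * M + p) := by linarith
      _ = cV2 * p := by rw [hcV2def]; ring
  -- the F-part
  have hFex : ∃ dF, HasDerivAt
      (fun y => (((pbR φ y)^(σ-1) : ℝ) : ℂ) * (vp lam1 lam2 σ φ t y)^2) dF x
      ∧ ‖dF‖ ≤ cF * p := by
    by_cases hz : φ x = 0
    · have hvx : vp lam1 lam2 σ φ t x = 0 := by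
        rw [pb_vp_eq]; simp [hz]
      have hgd : HasDerivAt (fun y => vp lam1 lam2 σ φ t y ^ 2) 0 x := by
        have h0 : dG * vp lam1 lam2 σ φ t x + vp lam1 lam2 σ φ t x * dG = 0 := by
          rw [hvx]; ring
        rw [← h0]; exact hV2
      have hb : ∀ y, ‖(((pbR φ y)^(σ-1) : ℝ) : ℂ)‖ ≤ Ms := fun y => by
        have hy0 : (0:ℝ) ≤ pbR φ y := by rw [pbR]; positivity
        rw [Complex.norm_real, Real.norm_eq_abs,
          _root_.abs_of_nonneg (Real.rpow_nonneg hy0 _), hMsdef]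
        exact Real.rpow_le_rpow hy0 (hrMy y) hs10
      refine ⟨0, pb_hasDerivAt_mul_zero hb hgd (by rw [hvx]; norm_num), ?_⟩
      rw [norm_zero]
      exact mul_nonneg hcF0 hp0
    · have hax : 0 < ‖φ x‖ := norm_pos_iff.mpr hz
      have hrpos : 0 < pbR φ x := by rw [pbR]; positivity
      have hr1 : HasDerivAt (fun y => (pbR φ y)^(σ-1))
          (R' * (σ-1) * (pbR φ x)^(σ-1-1)) x :=
        hR'.rpow_const (Or.inl hrpos.ne')
      have hr1C : HasDerivAt (fun y => (((pbR φ y)^(σ-1) : ℝ) : ℂ))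
          (((R' * (σ-1) * (pbR φ x)^(σ-1-1) : ℝ)) : ℂ) x :=
        Complex.ofRealCLM.hasFDerivAt.comp_hasDerivAt x hr1
      have hFd := hr1C.mul hV2
      refine ⟨_, hFd, ?_⟩
      have habsv2 : ‖(vp lam1 lam2 σ φ t x)^2‖ = pbR φ x := by
        rw [norm_pow, pb_abs_vp, pbR]
      have e2 : (pbR φ x)^(σ-1-1) * pbR φ x = (pbR φ x)^(σ-1) :=
        pb_rpow_sub_one_mul hrpos (σ-1)
      have hterm1 : ‖(((R' * (σ-1) * (pbR φ x)^(σ-1-1) : ℝ)) : ℂ)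
          * (vp lam1 lam2 σ φ t x)^2‖ ≤ (2*M*p) * |σ-1| * Ms := by
        rw [norm_mul, Complex.norm_real, Real.norm_eq_abs, habsv2, abs_mul, abs_mul,
          _root_.abs_of_nonneg (Real.rpow_nonneg hrpos.le _)]
        calc |R'| * |σ-1| * (pbR φ x)^(σ-1-1) * pbR φ x
            = |R'| * |σ-1| * ((pbR φ x)^(σ-1-1) * pbR φ x) := by ring
          _ = |R'| * |σ-1| * (pbR φ x)^(σ-1) := by rw [e2]
          _ ≤ (2*M*p) * |σ-1| * Ms := by
              refine mul_le_mul (mul_le_mul_of_nonneg_right hR (abs_nonneg _)) hrs1 hrs10 ?_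
              exact mul_nonneg h2Mp0 (abs_nonneg _)
      have hterm2 : ‖(((pbR φ x)^(σ-1) : ℝ) : ℂ)
          * (dG * vp lam1 lam2 σ φ t x + vp lam1 lam2 σ φ t x * dG)‖ ≤ Ms * (cV2 * p) := by
        rw [norm_mul, Complex.norm_real, Real.norm_eq_abs,
          _root_.abs_of_nonneg hrs10]
        exact mul_le_mul hrs1 hdV2b (norm_nonneg _) hMs0
      calc ‖(((R' * (σ-1) * (pbR φ x)^(σ-1-1) : ℝ)) : ℂ) * (vp lam1 lam2 σ φ t x)^2
            + (((pbR φ x)^(σ-1) : ℝ) : ℂ)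
              * (dG * vp lam1 lam2 σ φ t x + vp lam1 lam2 σ φ t x * dG)‖
          ≤ ‖(((R' * (σ-1) * (pbR φ x)^(σ-1-1) : ℝ)) : ℂ) * (vp lam1 lam2 σ φ t x)^2‖
            + ‖(((pbR φ x)^(σ-1) : ℝ) : ℂ)
              * (dG * vp lam1 lam2 σ φ t x + vp lam1 lam2 σ φ t x * dG)‖ := norm_add_le _ _
        _ ≤ (2*M*p) * |σ-1| * Ms + Ms * (cV2 * p) := add_le_add hterm1 hterm2
        _ = cF * p := by rw [hcFdef]; ring
  -- assemble potB
  obtain ⟨dF, hFd, hFb⟩ := hFex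
  have hBfun : potB lam1 lam2 σ φ t
      = fun y => ((lam1 * t^((1:ℝ)-2) : ℝ) : ℂ) * (vp lam1 lam2 σ φ t y)^2
        + ((lam2*σ*t^(σ-2) : ℝ) : ℂ)
          * ((((pbR φ y)^(σ-1) : ℝ) : ℂ) * (vp lam1 lam2 σ φ t y)^2) := by
    funext y
    rw [potB, pbR, show (2*(1:ℝ)-2) = 0 by norm_num, Real.rpow_zero,
      pb_rpow_two_mul_sub _ (norm_nonneg _) σ]
    push_cast
    ring
  refine ⟨((lam1 * t^((1:ℝ)-2) : ℝ) : ℂ)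
      * (dG * vp lam1 lam2 σ φ t x + vp lam1 lam2 σ φ t x * dG)
    + ((lam2*σ*t^(σ-2) : ℝ) : ℂ) * dF, ?_, ?_⟩
  · rw [hBfun]
    exact (hV2.const_mul _).add (hFd.const_mul _)
  · have hc1 : ‖((lam1 * t^((1:ℝ)-2) : ℝ) : ℂ)‖ = |lam1| * t^(-1:ℝ) := by
      rw [Complex.norm_real, Real.norm_eq_abs, htpow, abs_mul,
        _root_.abs_of_nonneg htinv.le]
    have hc2 : ‖((lam2*σ*t^(σ-2) : ℝ) : ℂ)‖ = |lam2| * |σ| * t^(σ-2) := by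
      rw [Complex.norm_real, Real.norm_eq_abs, abs_mul, abs_mul,
        _root_.abs_of_nonneg hts2']
    have hT1 : ‖((lam1 * t^((1:ℝ)-2) : ℝ) : ℂ)
        * (dG * vp lam1 lam2 σ φ t x + vp lam1 lam2 σ φ t x * dG)‖
        ≤ (|lam1| * t^(-1:ℝ)) * (cV2 * p) := by
      rw [norm_mul, hc1]
      exact mul_le_mul_of_nonneg_left hdV2b (mul_nonneg (abs_nonneg _) htinv.le)
    have hT2 : ‖((lam2*σ*t^(σ-2) : ℝ) : ℂ) * dF‖ ≤ (|lam2| * |σ| * t^(-1:ℝ)) * (cF * p) := by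
      rw [norm_mul, hc2]
      refine mul_le_mul (mul_le_mul_of_nonneg_left hts2 (mul_nonneg (abs_nonneg _) (abs_nonneg _)))
        hFb (norm_nonneg _) (mul_nonneg (mul_nonneg (abs_nonneg _) (abs_nonneg _)) htinv.le)
    calc ‖((lam1 * t^((1:ℝ)-2) : ℝ) : ℂ)
          * (dG * vp lam1 lam2 σ φ t x + vp lam1 lam2 σ φ t x * dG)
        + ((lam2*σ*t^(σ-2) : ℝ) : ℂ) * dF‖
        ≤ ‖((lam1 * t^((1:ℝ)-2) : ℝ) : ℂ)
            * (dG * vp lam1 lam2 σ φ t x + vp lam1 lam2 σ φ t x * dG)‖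
          + ‖((lam2*σ*t^(σ-2) : ℝ) : ℂ) * dF‖ := norm_add_le _ _
      _ ≤ (|lam1| * t^(-1:ℝ)) * (cV2 * p) + (|lam2| * |σ| * t^(-1:ℝ)) * (cF * p) := by
          linarith
      _ = (|lam1| * cV2 + |lam2| * |σ| * cF) * t^(-1:ℝ) * p := by ring
      _ = _ := by rw [hcFdef, hcV2def, hG1def, hQ2def, hTLdef, hMsdef]

lemma pb_bound_of_memLtop {φ : ℝ → ℂ} (hc : Continuous φ) (h : MemLp φ ⊤ volume) :
    ∃ M : ℝ, 0 ≤ M ∧ ∀ x, ‖φ x‖ ≤ M := by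
  set M := (eLpNorm φ ⊤ volume).toReal with hM
  refine ⟨M, ENNReal.toReal_nonneg, ?_⟩
  by_contra hx
  push_neg at hx
  obtain ⟨x₀, hx₀⟩ := hx
  have hU : IsOpen {x : ℝ | M < ‖φ x‖} :=
    isOpen_lt continuous_const (continuous_norm.comp hc)
  have hpos : 0 < volume {x : ℝ | M < ‖φ x‖} :=
    hU.measure_pos volume ⟨x₀, hx₀⟩
  have hae : ∀ᵐ x ∂(volume : Measure ℝ), ‖φ x‖ ≤ M := by
    filter_upwards [enorm_ae_le_eLpNormEssSup φ volume] with x hx2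
    have hfin : eLpNormEssSup φ volume ≠ ⊤ := by
      rw [← eLpNorm_exponent_top]; exact h.2.ne
    have := ENNReal.toReal_mono hfin hx2
    simpa [hM, eLpNorm_exponent_top] using this
  rw [ae_iff] at hae
  have h0 : volume {x : ℝ | M < ‖φ x‖} = 0 := by
    refine measure_mono_null ?_ hae
    intro x hx; simpa using not_le.mpr hx
  rw [h0] at hpos; exact lt_irrefl _ hpos

lemma pb_eLpNorm_deriv_le {E : Type*} [NormedAddCommGroup E] [NormedSpace ℝ E]
    {f : ℝ → E} {g : ℝ → ℂ} {c : ℝ} (hc : 0 ≤ c)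
    (h : ∀ x, ∃ d, HasDerivAt f d x ∧ ‖d‖ ≤ c * ‖g x‖) :
    eLpNorm (deriv f) 2 volume ≤ ENNReal.ofReal c * eLpNorm g 2 volume := by
  have hp : ∀ x, ‖deriv f x‖ ≤ ‖(c • g) x‖ := by
    intro x
    obtain ⟨d, hd, hb⟩ := h x
    rw [hd.deriv]
    simpa [norm_smul, _root_.abs_of_nonneg hc] using hb
  calc eLpNorm (deriv f) 2 volume ≤ eLpNorm (c • g) 2 volume := eLpNorm_mono hp
    _ ≤ (‖c‖₊ : ℝ≥0∞) * eLpNorm g 2 volume := eLpNorm_const_smul_le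
    _ = ENNReal.ofReal c * eLpNorm g 2 volume := by
        congr 1
        rw [← enorm_eq_nnnorm, ← ofReal_norm_eq_enorm, Real.norm_eq_abs, _root_.abs_of_nonneg hc]

/-- bounds for the potential coefficients `a`, `b`. -/
theorem potential_bounds (lam1 lam2 σ : ℝ) (hσ1 : 1 < σ) (hσ2 : σ < 2) (φ : ℝ → ℂ)
    (hφ : ContDiff ℝ 1 φ) (hinf : MemLp φ ⊤ volume)
    (hd2 : MemLp (deriv φ) 2 volume) :
    ∀ ε > 0, ∃ C > 0, ∀ t : ℝ, 0 < t → t ≤ 1 →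
      (∀ x : ℝ, |potA lam1 lam2 σ φ t x| + ‖potB lam1 lam2 σ φ t x‖
          ≤ C * t ^ (-1:ℝ)) ∧
      eLpNorm (deriv (potA lam1 lam2 σ φ t)) 2 volume
          + eLpNorm (deriv (potB lam1 lam2 σ φ t)) 2 volume
        ≤ ENNReal.ofReal (C * t ^ (-1-ε : ℝ)) := by
  intro ε hε
  have hφd : ∀ x : ℝ, HasDerivAt φ (deriv φ x) x := fun x =>
    (hφ.differentiable one_ne_zero x).hasDerivAt
  obtain ⟨M, hM0, hMb⟩ := pb_bound_of_memLtop hφ.continuous hinf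
  have hM20 : (0:ℝ) ≤ M^2 := sq_nonneg M
  have hM3 : (0:ℝ) ≤ M*M*M := mul_nonneg (mul_nonneg hM0 hM0) hM0
  have hs10 : (0:ℝ) ≤ σ - 1 := by linarith
  have hMs0 : (0:ℝ) ≤ (M^2)^(σ-1) := Real.rpow_nonneg hM20 _
  have hMsσ0 : (0:ℝ) ≤ (M^2)^σ := Real.rpow_nonneg hM20 _
  -- constants
  set Cs : ℝ := |lam1| * 2*M^2 + |lam2| * |σ+1| * (M^2)^σ + |lam1| * M^2
      + |lam2| * |σ| * (M^2)^σ with hCsdef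
  have hCs0 : (0:ℝ) ≤ Cs := by
    rw [hCsdef]
    have h1 : (0:ℝ) ≤ |lam1| * 2*M^2 := by positivity
    have h2 : (0:ℝ) ≤ |lam2| * |σ+1| * (M^2)^σ :=
      mul_nonneg (mul_nonneg (abs_nonneg _) (abs_nonneg _)) hMsσ0
    have h3 : (0:ℝ) ≤ |lam1| * M^2 := by positivity
    have h4 : (0:ℝ) ≤ |lam2| * |σ| * (M^2)^σ :=
      mul_nonneg (mul_nonneg (abs_nonneg _) (abs_nonneg _)) hMsσ0
    linarith
  set ΓA : ℝ := (|lam1| * 2 + |lam2| * |σ+1| * |σ| * (M^2)^(σ-1))*(2*M) with hΓAdef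
  have hΓA0 : (0:ℝ) ≤ ΓA := by
    rw [hΓAdef]
    have h1 : (0:ℝ) ≤ |lam2| * |σ+1| * |σ| * (M^2)^(σ-1) :=
      mul_nonneg (mul_nonneg (mul_nonneg (abs_nonneg _) (abs_nonneg _)) (abs_nonneg _)) hMs0
    have h2 : (0:ℝ) ≤ |lam1| * 2 := by positivity
    nlinarith
  set W1 : ℝ := 4*(M*M*M)* |lam1| * (|lam1| + |lam2| * |σ| * (M^2)^(σ-1)) with hW1def
  have hW10 : (0:ℝ) ≤ W1 := by
    rw [hW1def]
    exact mul_nonneg (mul_nonneg (by linarith) (abs_nonneg _))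
      (add_nonneg (abs_nonneg _)
        (mul_nonneg (mul_nonneg (abs_nonneg _) (abs_nonneg _)) hMs0))
  set β : ℝ := 4*(M*M*M)*(|lam2*σ/(σ-1)| * (M^2)^(σ-1)) + 2*M with hβdef
  have hβ0 : (0:ℝ) ≤ β := by
    rw [hβdef]
    have := mul_nonneg (by linarith : (0:ℝ) ≤ 4*(M*M*M))
      (mul_nonneg (abs_nonneg (lam2*σ/(σ-1))) hMs0)
    linarith
  set W2 : ℝ := |lam1| * β + |lam2| * |σ| * (|σ-1| * ((M^2)^(σ-1))*(2*M)
      + ((M^2)^(σ-1))*β) with hW2def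
  have hW20 : (0:ℝ) ≤ W2 := by
    rw [hW2def]
    have h1 : (0:ℝ) ≤ |lam1| * β := mul_nonneg (abs_nonneg _) hβ0
    have h2 : (0:ℝ) ≤ |σ-1| * ((M^2)^(σ-1))*(2*M) :=
      mul_nonneg (mul_nonneg (abs_nonneg _) hMs0) (by linarith)
    have h3 : (0:ℝ) ≤ ((M^2)^(σ-1))*β := mul_nonneg hMs0 hβ0
    have h4 : (0:ℝ) ≤ |lam2| * |σ| := mul_nonneg (abs_nonneg _) (abs_nonneg _)
    nlinarith
  set ΓB : ℝ := W1*(1/ε) + W2 with hΓBdef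
  have hΓB0 : (0:ℝ) ≤ ΓB := by
    rw [hΓBdef]
    have := mul_nonneg hW10 (by positivity : (0:ℝ) ≤ 1/ε)
    linarith
  set Nr : ℝ := (eLpNorm (deriv φ) 2 volume).toReal with hNrdef
  have hNr0 : (0:ℝ) ≤ Nr := ENNReal.toReal_nonneg
  have hNfin : eLpNorm (deriv φ) 2 volume = ENNReal.ofReal Nr :=
    (ENNReal.ofReal_toReal hd2.2.ne).symm
  have hCpos : (0:ℝ) < 1 + Cs + (ΓA + ΓB)*(Nr+1) := by
    have := mul_nonneg (add_nonneg hΓA0 hΓB0) (by linarith : (0:ℝ) ≤ Nr+1)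
    linarith
  refine ⟨1 + Cs + (ΓA + ΓB)*(Nr+1), hCpos, ?_⟩
  intro t ht0 ht1
  have htinv : (0:ℝ) < t^(-1:ℝ) := Real.rpow_pos_of_pos ht0 _
  have hmono : t^(-1:ℝ) ≤ t^(-1-ε:ℝ) :=
    Real.rpow_le_rpow_of_exponent_ge ht0 ht1 (by linarith)
  have htme : (0:ℝ) < t^(-1-ε:ℝ) := Real.rpow_pos_of_pos ht0 _
  have hlogkey : |Real.log t| * t^(-1:ℝ) ≤ (1/ε) * t^(-1-ε:ℝ) := by
    have hlt : Real.log t ≤ 0 := Real.log_nonpos ht0.le ht1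
    have h1 : |Real.log t| = Real.log t⁻¹ := by
      rw [Real.log_inv, abs_of_nonpos hlt]
    have h4 : (t⁻¹)^(ε:ℝ) = t^(-ε:ℝ) := by
      rw [Real.inv_rpow ht0.le, ← Real.rpow_neg ht0.le]
    have h2 : Real.log t⁻¹ ≤ (1/ε) * t^(-ε:ℝ) := by
      have h3 : Real.log ((t⁻¹)^(ε:ℝ)) ≤ (t⁻¹)^(ε:ℝ) - 1 :=
        Real.log_le_sub_one_of_pos (Real.rpow_pos_of_pos (inv_pos.2 ht0) _)
      rw [Real.log_rpow (inv_pos.2 ht0), h4] at h3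
      have hX : (0:ℝ) < t^(-ε:ℝ) := Real.rpow_pos_of_pos ht0 _
      rw [one_div, inv_mul_eq_div, le_div_iff₀ hε]
      nlinarith [h3]
    calc |Real.log t| * t^(-1:ℝ) ≤ ((1/ε) * t^(-ε:ℝ)) * t^(-1:ℝ) := by
          rw [h1]; exact mul_le_mul_of_nonneg_right h2 htinv.le
      _ = (1/ε) * t^(-1-ε:ℝ) := by
          rw [mul_assoc, ← Real.rpow_add ht0, show (-ε) + (-1) = (-1-ε:ℝ) by ring]
  constructor
  · -- sup bound
    intro x
    refine (pb_sup lam1 lam2 σ hσ1 hM0 hMb ht0 ht1 x).trans ?_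
    rw [← hCsdef]
    refine mul_le_mul_of_nonneg_right ?_ htinv.le
    have := mul_nonneg (add_nonneg hΓA0 hΓB0) (by linarith : (0:ℝ) ≤ Nr+1)
    linarith
  · -- derivative bound
    have hA2 : eLpNorm (deriv (potA lam1 lam2 σ φ t)) 2 volume
        ≤ ENNReal.ofReal (ΓA * t^(-1:ℝ)) * eLpNorm (deriv φ) 2 volume := by
      refine pb_eLpNorm_deriv_le (mul_nonneg hΓA0 htinv.le) (fun x => ?_)
      obtain ⟨d, h1, h2⟩ := pb_keyA lam1 lam2 σ hσ1 hφd hM0 hMb ht0 ht1 x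
      exact ⟨d, h1, by rw [hΓAdef, mul_assoc]; rw [mul_assoc] at h2; exact h2⟩
    set DBt : ℝ := (|lam1| * (4*(M*M*M)*(|lam1| * |Real.log t|
          + |lam2*σ/(σ-1)| * (M^2)^(σ-1)) + 2*M)
        + |lam2| * |σ| * (|σ-1| * ((M^2)^(σ-1))*(2*M)
          + ((M^2)^(σ-1))*(4*(M*M*M)*(|lam1| * |Real.log t|
            + |lam2*σ/(σ-1)| * (M^2)^(σ-1)) + 2*M))) * t^(-1:ℝ) with hDBtdef
    have hDBt0 : (0:ℝ) ≤ DBt := by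
      rw [hDBtdef]
      refine mul_nonneg ?_ htinv.le
      have hb0 : (0:ℝ) ≤ 4*(M*M*M)*(|lam1| * |Real.log t|
          + |lam2*σ/(σ-1)| * (M^2)^(σ-1)) + 2*M := by
        have := mul_nonneg (by linarith : (0:ℝ) ≤ 4*(M*M*M))
          (add_nonneg (mul_nonneg (abs_nonneg lam1) (abs_nonneg (Real.log t)))
            (mul_nonneg (abs_nonneg (lam2*σ/(σ-1))) hMs0))
        linarith
      have h1 : (0:ℝ) ≤ |lam1| * (4*(M*M*M)*(|lam1| * |Real.log t|
          + |lam2*σ/(σ-1)| * (M^2)^(σ-1)) + 2*M) := mul_nonneg (abs_nonneg _) hb0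
      have h2 : (0:ℝ) ≤ |σ-1| * ((M^2)^(σ-1))*(2*M) :=
        mul_nonneg (mul_nonneg (abs_nonneg _) hMs0) (by linarith)
      have h3 : (0:ℝ) ≤ ((M^2)^(σ-1))*(4*(M*M*M)*(|lam1| * |Real.log t|
          + |lam2*σ/(σ-1)| * (M^2)^(σ-1)) + 2*M) := mul_nonneg hMs0 hb0
      have h4 : (0:ℝ) ≤ |lam2| * |σ| := mul_nonneg (abs_nonneg _) (abs_nonneg _)
      nlinarith
    have hB2 : eLpNorm (deriv (potB lam1 lam2 σ φ t)) 2 volume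
        ≤ ENNReal.ofReal DBt * eLpNorm (deriv φ) 2 volume := by
      refine pb_eLpNorm_deriv_le hDBt0 (fun x => ?_)
      obtain ⟨d, h1, h2⟩ := pb_keyB lam1 lam2 σ hσ1 hφd hM0 hMb ht0 ht1 x
      exact ⟨d, h1, by rw [hDBtdef]; exact h2⟩
    have hDBle : DBt ≤ ΓB * t^(-1-ε:ℝ) := by
      rw [hDBtdef, hΓBdef, hW1def, hW2def, hβdef]
      calc (|lam1| * (4*(M*M*M)*(|lam1| * |Real.log t|
            + |lam2*σ/(σ-1)| * (M^2)^(σ-1)) + 2*M)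
          + |lam2| * |σ| * (|σ-1| * ((M^2)^(σ-1))*(2*M)
            + ((M^2)^(σ-1))*(4*(M*M*M)*(|lam1| * |Real.log t|
              + |lam2*σ/(σ-1)| * (M^2)^(σ-1)) + 2*M))) * t^(-1:ℝ)
          = (4*(M*M*M)* |lam1| * (|lam1| + |lam2| * |σ| * (M^2)^(σ-1)))
              * (|Real.log t| * t^(-1:ℝ))
            + (|lam1| * (4*(M*M*M)*(|lam2*σ/(σ-1)| * (M^2)^(σ-1)) + 2*M)
              + |lam2| * |σ| * (|σ-1| * ((M^2)^(σ-1))*(2*M)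
                + ((M^2)^(σ-1))*(4*(M*M*M)*(|lam2*σ/(σ-1)| * (M^2)^(σ-1)) + 2*M)))
              * t^(-1:ℝ) := by ring
        _ ≤ (4*(M*M*M)* |lam1| * (|lam1| + |lam2| * |σ| * (M^2)^(σ-1)))
              * ((1/ε) * t^(-1-ε:ℝ))
            + (|lam1| * (4*(M*M*M)*(|lam2*σ/(σ-1)| * (M^2)^(σ-1)) + 2*M)
              + |lam2| * |σ| * (|σ-1| * ((M^2)^(σ-1))*(2*M)
                + ((M^2)^(σ-1))*(4*(M*M*M)*(|lam2*σ/(σ-1)| * (M^2)^(σ-1)) + 2*M)))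
              * t^(-1-ε:ℝ) := by
            refine add_le_add (mul_le_mul_of_nonneg_left hlogkey ?_)
              (mul_le_mul_of_nonneg_left hmono ?_)
            · rw [← hW1def]; exact hW10
            · rw [← hβdef, ← hW2def]; exact hW20
        _ = ((4*(M*M*M)* |lam1| * (|lam1| + |lam2| * |σ| * (M^2)^(σ-1)))*(1/ε)
            + (|lam1| * (4*(M*M*M)*(|lam2*σ/(σ-1)| * (M^2)^(σ-1)) + 2*M)
              + |lam2| * |σ| * (|σ-1| * ((M^2)^(σ-1))*(2*M)
                + ((M^2)^(σ-1))*(4*(M*M*M)*(|lam2*σ/(σ-1)| * (M^2)^(σ-1)) + 2*M))))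
            * t^(-1-ε:ℝ) := by ring
    have hDAle : ΓA * t^(-1:ℝ) ≤ ΓA * t^(-1-ε:ℝ) := mul_le_mul_of_nonneg_left hmono hΓA0
    have hkey : (ΓA + ΓB)*Nr ≤ 1 + Cs + (ΓA + ΓB)*(Nr+1) := by nlinarith
    calc eLpNorm (deriv (potA lam1 lam2 σ φ t)) 2 volume
          + eLpNorm (deriv (potB lam1 lam2 σ φ t)) 2 volume
        ≤ ENNReal.ofReal (ΓA * t^(-1:ℝ)) * eLpNorm (deriv φ) 2 volume
          + ENNReal.ofReal DBt * eLpNorm (deriv φ) 2 volume := add_le_add hA2 hB2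
      _ ≤ ENNReal.ofReal (ΓA * t^(-1-ε:ℝ)) * eLpNorm (deriv φ) 2 volume
          + ENNReal.ofReal (ΓB * t^(-1-ε:ℝ)) * eLpNorm (deriv φ) 2 volume :=
          add_le_add (mul_le_mul_left (ENNReal.ofReal_le_ofReal hDAle) _)
            (mul_le_mul_left (ENNReal.ofReal_le_ofReal hDBle) _)
      _ = ENNReal.ofReal (ΓA * t^(-1-ε:ℝ) * Nr) + ENNReal.ofReal (ΓB * t^(-1-ε:ℝ) * Nr) := by
          rw [hNfin, ← ENNReal.ofReal_mul (mul_nonneg hΓA0 htme.le),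
            ← ENNReal.ofReal_mul (mul_nonneg hΓB0 htme.le)]
      _ = ENNReal.ofReal (ΓA * t^(-1-ε:ℝ) * Nr + ΓB * t^(-1-ε:ℝ) * Nr) := by
          rw [← ENNReal.ofReal_add (mul_nonneg (mul_nonneg hΓA0 htme.le) hNr0)
            (mul_nonneg (mul_nonneg hΓB0 htme.le) hNr0)]
      _ ≤ ENNReal.ofReal ((1 + Cs + (ΓA + ΓB)*(Nr+1)) * t^(-1-ε:ℝ)) := by
          refine ENNReal.ofReal_le_ofReal ?_
          calc ΓA * t^(-1-ε:ℝ) * Nr + ΓB * t^(-1-ε:ℝ) * Nr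
              = ((ΓA + ΓB)*Nr) * t^(-1-ε:ℝ) := by ring
            _ ≤ (1 + Cs + (ΓA + ΓB)*(Nr+1)) * t^(-1-ε:ℝ) :=
                mul_le_mul_of_nonneg_right hkey htme.le
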